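/- Let K be a convex body in R^n with 0 in its interior and q ∈ R. Then the 0-th dual curvature measure satisfies C̃_0(K,η) = (1/n) H^{n-1}(α_{K^*}(η)) for every Borel η ⊂ S^{n-1}; i.e., C̃_0(K,·) equals (1/n) times Aleksandrov's integral curvature of the polar body K^*. -/

import Mathlib

open Set MeasureTheory Metric Filter
open scoped RealInnerProductSpace Pointwise Topology

noncomputable section

/-- Euclidean `n`-space. -/
abbrev Vn (n : ℕ) := EuclideanSpace ℝ (Fin n)

/-- The support function `h_K(x) = max {⟪y, x⟫ : y ∈ K}` of a compact convex set. -/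
def suppFn {n : ℕ} (K : Set (Vn n)) (x : Vn n) : ℝ :=
  sSup ((fun y => ⟪y, x⟫) '' K)

/-- The radial function `ρ_K(x) = max {r ≥ 0 : r • x ∈ K}`. -/
def radFn {n : ℕ} (K : Set (Vn n)) (x : Vn n) : ℝ :=
  sSup {r : ℝ | 0 ≤ r ∧ r • x ∈ K}

/-- The polar body `K^* = {x : ⟪x, y⟫ ≤ 1 for all y ∈ K}`. -/
def polarBody {n : ℕ} (K : Set (Vn n)) : Set (Vn n) :=
  {x | ∀ y ∈ K, ⟪x, y⟫ ≤ 1}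

/-- The radial Gauss image: `α_K(ω) = {v ∈ S^{n-1} : ρ_K(u)u ∈ H_K(v) for some u ∈ ω}`. -/
def radGaussImage {n : ℕ} (K : Set (Vn n)) (ω : Set (Vn n)) : Set (Vn n) :=
  {v ∈ sphere (0 : Vn n) 1 | ∃ u ∈ ω, ⟪radFn K u • u, v⟫ = suppFn K v}

/-- The reverse radial Gauss image:
`α*_K(η) = {u ∈ S^{n-1} : ρ_K(u)u ∈ H_K(v) for some v ∈ η}`. -/
def revRadGaussImage {n : ℕ} (K : Set (Vn n)) (η : Set (Vn n)) : Set (Vn n) :=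
  {u ∈ sphere (0 : Vn n) 1 | ∃ v ∈ η, ⟪radFn K u • u, v⟫ = suppFn K v}

section Aux

variable {n : ℕ} {K : Set (Vn n)}

lemma suppFn_bddAbove (hK : IsCompact K) (x : Vn n) :
    BddAbove ((fun y => ⟪y, x⟫) '' K) := by
  obtain ⟨R, hR⟩ := isBounded_iff_forall_norm_le.mp hK.isBounded
  refine ⟨R * ‖x‖, ?_⟩
  rintro _ ⟨y, hy, rfl⟩
  calc ⟪y, x⟫ ≤ ‖y‖ * ‖x‖ := real_inner_le_norm y x
    _ ≤ R * ‖x‖ := by have := hR y hy; nlinarith [norm_nonneg x]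

lemma le_suppFn (hK : IsCompact K) {y : Vn n} (hy : y ∈ K) (x : Vn n) :
    ⟪y, x⟫ ≤ suppFn K x :=
  le_csSup (suppFn_bddAbove hK x) ⟨y, hy, rfl⟩

lemma suppFn_le (hne : K.Nonempty) {x : Vn n} {c : ℝ} (h : ∀ y ∈ K, ⟪y, x⟫ ≤ c) :
    suppFn K x ≤ c :=
  csSup_le (hne.image _) (by rintro _ ⟨y, hy, rfl⟩; exact h y hy)

lemma suppFn_pos (hK : IsCompact K) (h0 : (0 : Vn n) ∈ interior K) {x : Vn n}
    (hx : ‖x‖ = 1) : 0 < suppFn K x := by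
  obtain ⟨ε, hε, hball⟩ := Metric.mem_nhds_iff.mp (mem_interior_iff_mem_nhds.mp h0)
  have hmem : (ε / 2) • x ∈ K := by
    apply hball
    rw [mem_ball_zero_iff, norm_smul, hx, mul_one, Real.norm_eq_abs,
      abs_of_pos (half_pos hε)]
    linarith
  have h1 : ⟪(ε / 2) • x, x⟫ = ε / 2 := by
    rw [real_inner_smul_left, real_inner_self_eq_norm_sq, hx]; ring
  have := le_suppFn hK hmem x
  rw [h1] at this; linarith

lemma radFn_polarBody (hK : IsCompact K) (h0 : (0 : Vn n) ∈ interior K) {x : Vn n}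
    (hx : ‖x‖ = 1) : radFn (polarBody K) x = 1 / suppFn K x := by
  have hne : K.Nonempty := ⟨0, interior_subset h0⟩
  have hpos := suppFn_pos hK h0 hx
  have hset : {r : ℝ | 0 ≤ r ∧ r • x ∈ polarBody K} = Icc 0 (1 / suppFn K x) := by
    ext r
    simp only [mem_setOf_eq, mem_Icc, polarBody]
    constructor
    · rintro ⟨hr, hmem⟩
      refine ⟨hr, ?_⟩
      rcases eq_or_lt_of_le hr with rfl | hr'
      · positivity
      · have h1 : suppFn K x ≤ 1 / r := by
          apply suppFn_le hne
          intro y hy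
          have := hmem y hy
          rw [real_inner_smul_left] at this
          rw [real_inner_comm]
          rw [le_div_iff₀ hr', mul_comm]
          linarith
        rw [le_div_iff₀ hpos]
        calc r * suppFn K x ≤ r * (1 / r) := by nlinarith
          _ = 1 := by field_simp
    · rintro ⟨hr, hr'⟩
      refine ⟨hr, fun y hy => ?_⟩
      rw [real_inner_smul_left]
      have hyx : ⟪x, y⟫ ≤ suppFn K x := by
        rw [real_inner_comm]; exact le_suppFn hK hy x
      rcases le_or_gt ⟪x, y⟫ 0 with h | h
      · nlinarith
      · calc r * ⟪x, y⟫ ≤ (1 / suppFn K x) * suppFn K x := by nlinarith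
          _ = 1 := by field_simp
  rw [radFn, hset, csSup_Icc (by positivity)]

lemma polarBody_convex : Convex ℝ (polarBody K) := by
  intro a ha b hb s t hs ht hst
  intro y hy
  have h1 := ha y hy
  have h2 := hb y hy
  rw [inner_add_left, real_inner_smul_left, real_inner_smul_left]
  nlinarith

lemma polarBody_isClosed : IsClosed (polarBody K) := by
  have : polarBody K = ⋂ y ∈ K, {x : Vn n | ⟪x, y⟫ ≤ 1} := by
    ext x; simp [polarBody]
  rw [this]
  exact isClosed_biInter fun y _ =>
    isClosed_le (Continuous.inner continuous_id continuous_const) continuous_const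

lemma polarBody_isCompact (h0 : (0 : Vn n) ∈ interior K) : IsCompact (polarBody K) := by
  obtain ⟨ε, hε, hball⟩ := Metric.mem_nhds_iff.mp (mem_interior_iff_mem_nhds.mp h0)
  apply isCompact_of_isClosed_isBounded polarBody_isClosed
  rw [isBounded_iff_forall_norm_le]
  refine ⟨2 / ε, fun z hz => ?_⟩
  rcases eq_or_ne z 0 with rfl | hz0
  · simp; positivity
  · have hzn : 0 < ‖z‖ := norm_pos_iff.mpr hz0
    have hmem : (ε / 2) • (‖z‖⁻¹ • z) ∈ K := by
      apply hball
      rw [mem_ball_zero_iff, norm_smul, norm_smul, norm_inv, norm_norm,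
        Real.norm_eq_abs, abs_of_pos (half_pos hε)]
      field_simp
      linarith
    have h1 : ⟪z, (ε / 2) • (‖z‖⁻¹ • z)⟫ ≤ 1 := hz _ hmem
    rw [real_inner_smul_right, real_inner_smul_right, real_inner_self_eq_norm_sq] at h1
    have h2 : ε / 2 * (‖z‖⁻¹ * ‖z‖ ^ 2) = ε / 2 * ‖z‖ := by field_simp
    rw [h2] at h1
    rw [le_div_iff₀ hε]; nlinarith

end Aux

section Aux2

variable {n : ℕ} {K : Set (Vn n)}

lemma polarBody_zero_mem_interior (hK : IsCompact K) (hne : K.Nonempty) :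
    (0 : Vn n) ∈ interior (polarBody K) := by
  obtain ⟨R, hR⟩ := isBounded_iff_forall_norm_le.mp hK.isBounded
  have hR1 : 0 < R + 1 := by
    obtain ⟨y, hy⟩ := hne
    have := hR y hy; nlinarith [norm_nonneg y]
  apply mem_interior.mpr
  refine ⟨ball 0 (1 / (R + 1)), ?_, isOpen_ball, by simp; positivity⟩
  intro z hz y hy
  rw [mem_ball_zero_iff] at hz
  calc ⟪z, y⟫ ≤ ‖z‖ * ‖y‖ := real_inner_le_norm z y
    _ ≤ ‖z‖ * (R + 1) := by nlinarith [norm_nonneg z, hR y hy]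
    _ ≤ 1 := by rw [lt_div_iff₀ hR1] at hz; linarith

lemma polarBody_bipolar (hcl : IsClosed K) (hconv : Convex ℝ K)
    (h0K : (0 : Vn n) ∈ K) : polarBody (polarBody K) = K := by
  ext x
  constructor
  · intro hx
    by_contra hxK
    obtain ⟨f, c, hfa, hfx⟩ := geometric_hahn_banach_closed_point hconv hcl hxK
    have hc : 0 < c := by have := hfa 0 h0K; simpa using this
    set w := (InnerProductSpace.toDual ℝ (Vn n)).symm f with hw
    have hwv : ∀ v, ⟪w, v⟫ = f v := fun v => InnerProductSpace.toDual_symm_apply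
    have hzmem : c⁻¹ • w ∈ polarBody K := by
      intro y hy
      rw [real_inner_smul_left, hwv]
      have h1 := (hfa y hy).le
      calc c⁻¹ * f y ≤ c⁻¹ * c := by
            apply mul_le_mul_of_nonneg_left h1 (inv_nonneg.mpr hc.le)
        _ = 1 := inv_mul_cancel₀ hc.ne'
    have h2 : ⟪x, c⁻¹ • w⟫ ≤ 1 := hx _ hzmem
    rw [real_inner_smul_right, real_inner_comm, hwv] at h2
    have : c⁻¹ * f x > 1 := by
      rw [gt_iff_lt, ← inv_mul_cancel₀ hc.ne']
      exact mul_lt_mul_of_pos_left hfx (inv_pos.mpr hc)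
    linarith
  · intro hxK z hz
    have := hz x hxK
    rwa [real_inner_comm]

end Aux2

lemma revRad_eq_radGauss_polar {n : ℕ} {K : Set (Vn n)} (hKcpt : IsCompact K)
    (hKconv : Convex ℝ K) (h0 : (0 : Vn n) ∈ interior K) {η : Set (Vn n)}
    (hη : η ⊆ sphere (0 : Vn n) 1) :
    revRadGaussImage K η = radGaussImage (polarBody K) η := by
  have hne : K.Nonempty := ⟨0, interior_subset h0⟩
  have hPcpt := polarBody_isCompact (K := K) h0
  have hP0 := polarBody_zero_mem_interior hKcpt hne
  have hbip := polarBody_bipolar hKcpt.isClosed hKconv (interior_subset h0)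
  have hradK : ∀ x : Vn n, ‖x‖ = 1 → radFn K x = 1 / suppFn (polarBody K) x := by
    intro x hx
    have := radFn_polarBody hPcpt hP0 hx
    rwa [hbip] at this
  ext x
  simp only [revRadGaussImage, radGaussImage, mem_sep_iff]
  refine and_congr_right fun hxs => ?_
  have hx1 : ‖x‖ = 1 := by rwa [mem_sphere_zero_iff_norm] at hxs
  have hsx := suppFn_pos hPcpt hP0 hx1
  constructor
  · rintro ⟨w, hwη, hcond⟩
    have hw1 : ‖w‖ = 1 := by have := hη hwη; rwa [mem_sphere_zero_iff_norm] at this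
    have hsw := suppFn_pos hKcpt h0 hw1
    refine ⟨w, hwη, ?_⟩
    rw [real_inner_smul_left, hradK x hx1, real_inner_comm w x] at hcond
    rw [real_inner_smul_left, radFn_polarBody hKcpt h0 hw1]
    field_simp at hcond ⊢
    nlinarith [hsx, hsw]
  · rintro ⟨w, hwη, hcond⟩
    have hw1 : ‖w‖ = 1 := by have := hη hwη; rwa [mem_sphere_zero_iff_norm] at this
    have hsw := suppFn_pos hKcpt h0 hw1
    refine ⟨w, hwη, ?_⟩
    rw [real_inner_smul_left, radFn_polarBody hKcpt h0 hw1] at hcond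
    rw [real_inner_smul_left, hradK x hx1, real_inner_comm w x]
    field_simp at hcond ⊢
    nlinarith [hsx, hsw]

/-- For a convex body `K` with `0` in its interior, the `0`-th dual curvature measure satisfies
`C̃_0(K,η) = (1/n) H^{n-1}(α_{K^*}(η))` for every Borel `η ⊆ S^{n-1}`; i.e. `C̃_0(K,·)` is
`(1/n)` times Aleksandrov's integral curvature of the polar body `K^*`. -/
theorem stmt17 {n : ℕ} (hn : 0 < n) (K : Set (Vn n)) (hKcpt : IsCompact K)
    (hKconv : Convex ℝ K) (h0 : (0 : Vn n) ∈ interior K) :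
    ∀ η : Set (Vn n), MeasurableSet η → η ⊆ sphere (0 : Vn n) 1 →
      (1 / (n : ℝ)) *
          ∫ u in revRadGaussImage K η, (radFn K u) ^ (0 : ℝ) ∂ μH[(n : ℝ) - 1] =
        (1 / (n : ℝ)) * (μH[(n : ℝ) - 1] (radGaussImage (polarBody K) η)).toReal := by
  intro η hmeas hη
  rw [← revRad_eq_radGauss_polar hKcpt hKconv h0 hη]
  congr 1
  simp only [Real.rpow_zero]
  rw [setIntegral_const, smul_eq_mul, mul_one]
  rfl
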